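/- arXiv:2003.05213 — 6 statements merged into one kernel-verified Lean document; each statement's English description precedes it below -/
import Mathlib

section
/- Soundness of the skew monoidal sequent calculus: for every derivation f of a sequent S ∣ Γ ⟶ C in the skew monoidal sequent calculus, there is a derivation sound f : ⟦S ∣ Γ⟧ ⟶ C in the categorical calculus. In particular, for every derivation of A ∣ – ⟶ C there is a map A ⟶ C in the free skew monoidal category Fsk(Var). -/
set_option linter.unusedVariables false
inductive Fma (V : Type) : Type
  | var : V → Fma V
  | unit : Fma V
  | tens : Fma V → Fma V → Fma V

abbrev Stp (V : Type) := Option (Fma V)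

def stpF {V : Type} : Stp V → Fma V
  | none => Fma.unit
  | some A => A

def semF {V : Type} : Fma V → List (Fma V) → Fma V
  | A, [] => A
  | A, B :: Γ => semF (A.tens B) Γ

abbrev sem {V : Type} (S : Stp V) (Γ : List (Fma V)) : Fma V := semF (stpF S) Γ

theorem semF_append {V : Type} (A : Fma V) (Γ Δ : List (Fma V)) :
    semF A (Γ ++ Δ) = semF (semF A Γ) Δ := by
  induction Γ generalizing A with
  | nil => rfl
  | cons B Γ ih => exact ih _

/-- The categorical calculus: derivations A ⟶ C of the free skew monoidal category. -/
inductive Der {V : Type} : Fma V → Fma V → Type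
  | id : Der A A
  | comp : Der B C → Der A B → Der A C
  | tens : Der A C → Der B D → Der (Fma.tens A B) (Fma.tens C D)
  | lam : Der (Fma.tens Fma.unit A) A
  | rho : Der A (Fma.tens A Fma.unit)
  | alpha : Der (Fma.tens (Fma.tens A B) C) (Fma.tens A (Fma.tens B C))

/-- The skew monoidal sequent calculus (with the two cut rules). -/
inductive SeqD {V : Type} : Stp V → List (Fma V) → Fma V → Type
  | ax : SeqD (some A) [] A
  | uf : SeqD (some A) Γ C → SeqD none (A :: Γ) C
  | Il : SeqD none Γ C → SeqD (some Fma.unit) Γ C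
  | Ir : SeqD none [] Fma.unit
  | tl : SeqD (some A) (B :: Γ) C → SeqD (some (Fma.tens A B)) Γ C
  | tr : SeqD S Γ A → SeqD none Δ B → SeqD S (Γ ++ Δ) (Fma.tens A B)
  | scut : SeqD S Γ A → SeqD (some A) Δ C → SeqD S (Γ ++ Δ) C
  | ccut : SeqD none Γ A → SeqD S (Δ₀ ++ A :: Δ₁) C → SeqD S ((Δ₀ ++ Γ) ++ Δ₁) C

def semDer {V : Type} {A B : Fma V} (f : Der A B) : ∀ Γ, Der (semF A Γ) (semF B Γ)
  | [] => f
  | _ :: Γ => semDer (Der.tens f Der.id) Γ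

def psi {V : Type} (X Y : Fma V) : ∀ Δ, Der (semF (Fma.tens X Y) Δ) (Fma.tens X (semF Y Δ))
  | [] => Der.id
  | B :: Δ => Der.comp (psi X (Fma.tens Y B) Δ) (semDer Der.alpha Δ)

def phi {V : Type} (X : Fma V) (Δ : List (Fma V)) :
    Der (semF X Δ) (Fma.tens X (semF Fma.unit Δ)) :=
  Der.comp (psi X Fma.unit Δ) (semDer Der.rho Δ)

theorem sound_aux {V : Type} {S : Stp V} {Γ : List (Fma V)} {C : Fma V}
    (f : SeqD S Γ C) : Nonempty (Der (sem S Γ) C) := by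
  induction f with
  | ax => exact ⟨Der.id⟩
  | uf f ih => exact ⟨Der.comp ih.some (semDer Der.lam _)⟩
  | Il f ih => exact ih
  | Ir => exact ⟨Der.id⟩
  | tl f ih => exact ih
  | @tr S Γ A Δ B f g ihf ihg =>
      refine ⟨?_⟩
      have h : sem S (Γ ++ Δ) = semF (semF (stpF S) Γ) Δ := semF_append _ _ _
      rw [show sem S (Γ ++ Δ) = semF (semF (stpF S) Γ) Δ from semF_append _ _ _]
      exact Der.comp (Der.comp (Der.tens Der.id ihg.some) (phi A Δ)) (semDer ihf.some Δ)
  | @scut S Γ A Δ C f g ihf ihg =>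
      refine ⟨?_⟩
      rw [show sem S (Γ ++ Δ) = semF (semF (stpF S) Γ) Δ from semF_append _ _ _]
      exact Der.comp ihg.some (semDer ihf.some Δ)
  | @ccut Γ A S Δ₀ Δ₁ C f g ihf ihg =>
      refine ⟨?_⟩
      have h : sem S ((Δ₀ ++ Γ) ++ Δ₁) = semF (semF (semF (stpF S) Δ₀) Γ) Δ₁ :=
        (semF_append _ (Δ₀ ++ Γ) Δ₁).trans
          (congrArg (fun X => semF X Δ₁) (semF_append _ Δ₀ Γ))
      have h2 : sem S (Δ₀ ++ A :: Δ₁) = semF (Fma.tens (semF (stpF S) Δ₀) A) Δ₁ :=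
        semF_append _ Δ₀ (A :: Δ₁)
      rw [h]
      rw [h2] at ihg
      exact Der.comp ihg.some
        (semDer (Der.comp (Der.tens Der.id ihf.some) (phi _ Γ)) Δ₁)

/-- Soundness of the skew monoidal sequent calculus: every derivation of `S ∣ Γ ⟶ C`
yields a categorical derivation `⟦S ∣ Γ⟧ ⟶ C`; in particular every derivation of
`A ∣ – ⟶ C` yields a map `A ⟶ C` in the free skew monoidal category. -/
theorem statement0 (V : Type) :
    (∀ (S : Stp V) (Γ : List (Fma V)) (C : Fma V),
      SeqD S Γ C → Nonempty (Der (sem S Γ) C)) ∧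
    (∀ (A C : Fma V), SeqD (some A) [] C → Nonempty (Der A C)) := by
  refine ⟨fun S Γ C f => sound_aux f, fun A C f => sound_aux f⟩
end

section
/- Completeness of the skew monoidal sequent calculus: for every derivation f : A ⟶ C in the categorical calculus, there is a derivation cmplt f of the sequent A ∣ – ⟶ C in the skew monoidal sequent calculus. -/
set_option linter.unusedVariables false
/-- Completeness of the skew monoidal sequent calculus: every categorical derivation
`f : A ⟶ C` yields a derivation of the sequent `A ∣ – ⟶ C`. -/
theorem statement1 (V : Type) (A C : Fma V) (f : Der A C) :
    Nonempty (SeqD (some A) [] C) := by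
  induction f with
  | id => exact ⟨SeqD.ax⟩
  | comp g f ihg ihf =>
    obtain ⟨f'⟩ := ihf; obtain ⟨g'⟩ := ihg
    exact ⟨SeqD.scut f' g'⟩
  | tens f g ihf ihg =>
    obtain ⟨f'⟩ := ihf; obtain ⟨g'⟩ := ihg
    exact ⟨SeqD.tl (SeqD.tr f' (SeqD.uf g'))⟩
  | lam => exact ⟨SeqD.tl (SeqD.Il (SeqD.uf SeqD.ax))⟩
  | rho => exact ⟨SeqD.tr SeqD.ax SeqD.Ir⟩
  | alpha => exact ⟨SeqD.tl (SeqD.tl (SeqD.tr SeqD.ax (SeqD.uf (SeqD.tr SeqD.ax (SeqD.uf SeqD.ax)))))⟩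
end

section
/- For any stoup S and contexts Γ, Δ, there is a derivation φ_{S,Γ,Δ} : ⟦S ∣ Γ, Δ⟧ ⟶ ⟦S ∣ Γ⟧ ⊗ ⟦– ∣ Δ⟧ in the categorical calculus. -/
set_option linter.unusedVariables false
theorem phi_s5 {V : Type} (A : Fma V) (Δ : List (Fma V)) :
    Nonempty (Der (semF A Δ) (Fma.tens A (semF Fma.unit Δ))) := by
  induction Δ using List.reverseRecOn with
  | nil => exact ⟨Der.rho⟩
  | append_singleton Δ B ih =>
    obtain ⟨f⟩ := ih
    rw [semF_append, semF_append]
    exact ⟨Der.comp Der.alpha (Der.tens f Der.id)⟩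

/-- There is a derivation `φ_{S,Γ,Δ} : ⟦S ∣ Γ, Δ⟧ ⟶ ⟦S ∣ Γ⟧ ⊗ ⟦– ∣ Δ⟧`. -/
theorem statement5 (V : Type) (S : Stp V) (Γ Δ : List (Fma V)) :
    Nonempty (Der (sem S (Γ ++ Δ)) (Fma.tens (sem S Γ) (sem none Δ))) := by
  rw [show sem S (Γ ++ Δ) = semF (sem S Γ) Δ from semF_append _ _ _]
  exact phi_s5 _ _
end

section
/- Eliminability of cuts: each of the rules scut and ccut of the skew monoidal sequent calculus is admissible in the cut-free fragment, i.e., given cut-free derivations of the premises of scut (respectively ccut), there is a cut-free derivation of its conclusion. -/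
set_option linter.unusedVariables false
/-- The cut-free skew monoidal sequent calculus. -/
inductive CF {V : Type} : Stp V → List (Fma V) → Fma V → Type
  | ax : CF (some A) [] A
  | uf : CF (some A) Γ C → CF none (A :: Γ) C
  | Il : CF none Γ C → CF (some Fma.unit) Γ C
  | Ir : CF none [] Fma.unit
  | tl : CF (some A) (B :: Γ) C → CF (some (Fma.tens A B)) Γ C
  | tr : CF S Γ A → CF none Δ B → CF S (Γ ++ Δ) (Fma.tens A B)


def szF {V : Type} : Fma V → Nat
  | .var _ => 1
  | .unit => 1
  | .tens A B => szF A + szF B + 1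

def sz {V : Type} {S : Stp V} {Γ : List (Fma V)} {C : Fma V} : CF S Γ C → Nat
  | .ax => 1
  | .uf f => sz f + 1
  | .Il f => sz f + 1
  | .Ir => 1
  | .tl f => sz f + 1
  | .tr f g => sz f + sz g + 1

theorem split_app {α : Type} {l1 l2 d0 d1 : List α} {a : α}
    (h : l1 ++ l2 = d0 ++ a :: d1) :
    (∃ l, l1 = d0 ++ a :: l ∧ d1 = l ++ l2) ∨ (∃ l, d0 = l1 ++ l ∧ l2 = l ++ a :: d1) := by
  induction l1 generalizing d0 with
  | nil => right; exact ⟨d0, rfl, h⟩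
  | cons x l1 ih =>
    cases d0 with
    | nil =>
      simp only [List.nil_append, List.cons_append, List.cons.injEq] at h ⊢
      exact Or.inl ⟨l1, ⟨h.1, rfl⟩, h.2.symm⟩
    | cons y d0 =>
      simp only [List.cons_append, List.cons.injEq] at h
      obtain ⟨rfl, h⟩ := h
      rcases ih h with ⟨l, rfl, rfl⟩ | ⟨l, rfl, rfl⟩
      · exact Or.inl ⟨l, rfl, rfl⟩
      · exact Or.inr ⟨l, rfl, rfl⟩

def ScutP (V : Type) (a b c : Nat) : Prop :=
  ∀ (S : Stp V) (Γ Δ : List (Fma V)) (A C : Fma V)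
    (f : CF S Γ A) (g : CF (some A) Δ C),
    szF A = a → sz g = b → sz f = c → Nonempty (CF S (Γ ++ Δ) C)

def CcutP (V : Type) (a b : Nat) : Prop :=
  ∀ (S : Stp V) (Γ Δ₀ Δ₁ : List (Fma V)) (A C : Fma V)
    (g : CF none Γ A) (f : CF S (Δ₀ ++ A :: Δ₁) C),
    szF A = a → sz f = b → Nonempty (CF S ((Δ₀ ++ Γ) ++ Δ₁) C)

theorem main (V : Type) : ∀ a b, (∀ c, ScutP V a b c) ∧ CcutP V a b := by
  intro a
  induction a using Nat.strong_induction_on with | _ a IHa =>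
  intro b
  induction b using Nat.strong_induction_on with | _ b IHb =>
  constructor
  · intro c
    induction c using Nat.strong_induction_on with | _ c IHc =>
    intro S Γ Δ A C f g ha hb hc
    subst ha; subst hb; subst hc
    cases f with
    | ax => exact ⟨g⟩
    | uf f' =>
      obtain ⟨h⟩ := IHc _ (by simp [sz]) _ _ _ _ _ f' g rfl rfl rfl
      exact ⟨.uf h⟩
    | Il f' =>
      obtain ⟨h⟩ := IHc _ (by simp [sz]) _ _ _ _ _ f' g rfl rfl rfl
      exact ⟨.Il h⟩
    | Ir =>
      cases g with
      | ax => exact ⟨.Ir⟩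
      | Il g' => exact ⟨g'⟩
      | tr g1 g2 =>
        obtain ⟨h⟩ := (IHb _ (by simp [sz])).1 _ _ _ _ _ _ CF.Ir g1 rfl rfl rfl
        simp only [List.nil_append] at h ⊢
        exact ⟨.tr h g2⟩
    | tl f' =>
      obtain ⟨h⟩ := IHc _ (by simp [sz]) _ _ _ _ _ f' g rfl rfl rfl
      exact ⟨.tl h⟩
    | tr f1 f2 =>
      rename_i Γ1 A1 Γ2 A2
      cases g with
      | ax =>
        rw [List.append_nil]
        exact ⟨.tr f1 f2⟩
      | tl g' =>
        obtain ⟨h⟩ := (IHa (szF A1) (by simp [szF]) (sz g')).1 _ _ _ _ _ _ f1 g' rfl rfl rfl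
        obtain ⟨h2⟩ := (IHa (szF A2) (by simp [szF]) (sz h)).2 _ _ _ _ _ _ f2 h rfl rfl
        exact ⟨h2⟩
      | tr g1 g2 =>
        obtain ⟨h⟩ := (IHb _ (by simp [sz])).1 _ _ _ _ _ _ (CF.tr f1 f2) g1 rfl rfl rfl
        rw [← List.append_assoc]
        exact ⟨.tr h g2⟩
  · intro S Γ Δ₀ Δ₁ A C g f ha hb
    subst ha; subst hb
    generalize hE : Δ₀ ++ A :: Δ₁ = Ξ at f
    cases f with
    | ax => exact absurd hE (by simp)
    | uf f' =>
      rename_i A' Γ'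
      cases Δ₀ with
      | nil =>
        simp only [List.nil_append, List.cons.injEq] at hE
        obtain ⟨rfl, rfl⟩ := hE
        obtain ⟨h⟩ := (IHb _ (by simp [sz])).1 _ _ _ _ _ _ g f' rfl rfl rfl
        exact ⟨h⟩
      | cons X Δ₀ =>
        simp only [List.cons_append, List.cons.injEq] at hE
        obtain ⟨rfl, rfl⟩ := hE
        obtain ⟨h⟩ := (IHb _ (by simp [sz])).2 _ _ _ _ _ _ g f' rfl rfl
        exact ⟨.uf h⟩
    | Il f' =>
      subst hE
      obtain ⟨h⟩ := (IHb _ (by simp [sz])).2 _ _ _ _ _ _ g f' rfl rfl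
      exact ⟨.Il h⟩
    | Ir => exact absurd hE (by simp)
    | tl f' =>
      subst hE
      rename_i A1 B1
      obtain ⟨h⟩ := (IHb _ (by simp [sz])).2 _ _ (B1 :: Δ₀) _ _ _ g f' rfl rfl
      exact ⟨.tl h⟩
    | tr f1 f2 =>
      rename_i Γ1 A1 Γ2 A2
      rcases split_app hE.symm with ⟨l, rfl, rfl⟩ | ⟨l, rfl, rfl⟩
      · obtain ⟨h⟩ := (IHb _ (by simp [sz])).2 _ _ _ _ _ _ g f1 rfl rfl
        rw [← List.append_assoc]
        exact ⟨.tr h f2⟩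
      · obtain ⟨h⟩ := (IHb _ (by simp [sz])).2 _ _ _ _ _ _ g f2 rfl rfl
        rw [List.append_assoc Γ1, List.append_assoc Γ1]
        exact ⟨.tr f1 h⟩

/-- Eliminability of cuts: the rules `scut` and `ccut` are admissible in the cut-free
fragment of the skew monoidal sequent calculus. -/
theorem statement6 (V : Type) :
    (∀ (S : Stp V) (Γ Δ : List (Fma V)) (A C : Fma V),
      CF S Γ A → CF (some A) Δ C → Nonempty (CF S (Γ ++ Δ) C)) ∧
    (∀ (S : Stp V) (Γ Δ₀ Δ₁ : List (Fma V)) (A C : Fma V),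
      CF none Γ A → CF S (Δ₀ ++ A :: Δ₁) C → Nonempty (CF S ((Δ₀ ++ Γ) ++ Δ₁) C)) := by
  constructor
  · intro S Γ Δ A C f g
    exact (main V (szF A) (sz g)).1 (sz f) _ _ _ _ _ f g rfl rfl rfl
  · intro S Γ Δ₀ Δ₁ A C g f
    exact (main V (szF A) (sz f)).2 _ _ _ _ _ _ g f rfl rfl
end

section
/- Invertibility of IL and ⊗L: the rules IL⁻¹ (from a cut-free derivation of I ∣ Γ ⟶ C obtain a cut-free derivation of – ∣ Γ ⟶ C) and ⊗L⁻¹ (from a cut-free derivation of A ⊗ B ∣ Γ ⟶ C obtain a cut-free derivation of A ∣ B, Γ ⟶ C) are admissible; moreover they are compatible with ◦≐ and inverse to IL and ⊗L in the sense that IL⁻¹(IL f) = f, IL(IL⁻¹ f) ◦≐ f, ⊗L⁻¹(⊗L f) = f, and ⊗L(⊗L⁻¹ f) ◦≐ f for all derivations f of the appropriate type. -/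
set_option linter.unusedVariables false
inductive CFEq {V : Type} : {S : Stp V} → {Γ : List (Fma V)} → {C : Fma V} → CF S Γ C → CF S Γ C → Prop
  | refl : CFEq f f
  | symm : CFEq f g → CFEq g f
  | trans : CFEq f g → CFEq g h → CFEq f h
  | ufCong : CFEq f g → CFEq (CF.uf f) (CF.uf g)
  | IlCong : CFEq f g → CFEq (CF.Il f) (CF.Il g)
  | tlCong : CFEq f g → CFEq (CF.tl f) (CF.tl g)
  | trCong : CFEq f f' → CFEq g g' → CFEq (CF.tr f g) (CF.tr f' g')
  | axI : CFEq (CF.ax (A := Fma.unit (V := V))) (CF.Il CF.Ir)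
  | axTens : CFEq (CF.ax (A := Fma.tens A B)) (CF.tl (CF.tr CF.ax (CF.uf CF.ax)))
  | trUf : CFEq (CF.tr (CF.uf f) g) (CF.uf (CF.tr f g))
  | trIl : CFEq (CF.tr (CF.Il f) g) (CF.Il (CF.tr f g))
  | trTl : CFEq (CF.tr (CF.tl f) g) (CF.tl (CF.tr f g))

def ILinv {V : Type} {Γ : List (Fma V)} {C : Fma V} : CF (some Fma.unit) Γ C → CF none Γ C
  | .ax => .Ir
  | .Il f => f
  | .tr f g => .tr (ILinv f) g

def tensLinv {V : Type} {Γ : List (Fma V)} {A B C : Fma V} :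
    CF (some (Fma.tens A B)) Γ C → CF (some A) (B :: Γ) C
  | .ax => .tr .ax (.uf .ax)
  | .tl f => f
  | .tr f g => .tr (tensLinv f) g

theorem ILinvCong' {V : Type} {S : Stp V} {Γ : List (Fma V)} {C : Fma V}
    {f g : CF S Γ C} (e : CFEq f g) :
    ∀ (h : S = some Fma.unit), CFEq (ILinv (h ▸ f)) (ILinv (h ▸ g)) := by
  induction e with
  | refl => intro h; exact .refl
  | symm _ ih => intro h; exact .symm (ih h)
  | trans _ _ ih1 ih2 => intro h; exact .trans (ih1 h) (ih2 h)
  | ufCong _ _ => intro h; cases h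
  | IlCong e _ => intro h; cases h; simpa [ILinv] using e
  | tlCong _ _ => intro h; cases h
  | trCong _ e2 ih1 _ => intro h; cases h; exact .trCong (ih1 rfl) e2
  | axI => intro h; cases h; exact .refl
  | axTens => intro h; cases h
  | trUf => intro h; cases h
  | trIl => intro h; cases h; simp only [ILinv]; exact .refl
  | trTl => intro h; cases h

theorem tensLinvCong' {V : Type} {S : Stp V} {Γ : List (Fma V)} {C : Fma V}
    {f g : CF S Γ C} (e : CFEq f g) :
    ∀ {A B : Fma V} (h : S = some (Fma.tens A B)),
      CFEq (tensLinv (h ▸ f)) (tensLinv (h ▸ g)) := by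
  induction e with
  | refl => intro A B h; exact .refl
  | symm _ ih => intro A B h; exact .symm (ih h)
  | trans _ _ ih1 ih2 => intro A B h; exact .trans (ih1 h) (ih2 h)
  | ufCong _ _ => intro A B h; cases h
  | IlCong _ _ => intro A B h; cases h
  | tlCong e _ => intro A B h; cases h; simpa [tensLinv] using e
  | trCong _ e2 ih1 _ => intro A B h; cases h; exact .trCong (ih1 rfl) e2
  | axI => intro A B h; cases h
  | axTens => intro A B h; cases h; exact .refl
  | trUf => intro A B h; cases h
  | trIl => intro A B h; cases h
  | trTl => intro A B h; cases h; simp only [tensLinv]; exact .refl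

theorem IlILinv {V : Type} : ∀ {Γ : List (Fma V)} {C : Fma V}
    (f : CF (some (Fma.unit : Fma V)) Γ C), CFEq (CF.Il (ILinv f)) f
  | _, _, .ax => by simp only [ILinv]; exact .symm .axI
  | _, _, .Il f => by simp only [ILinv]; exact .refl
  | _, _, .tr f g => by
      simp only [ILinv]; exact .trans (.symm .trIl) (.trCong (IlILinv f) .refl)

theorem tlTensLinv {V : Type} : ∀ {Γ : List (Fma V)} {A B C : Fma V}
    (f : CF (some (Fma.tens A B)) Γ C), CFEq (CF.tl (tensLinv f)) f
  | _, _, _, _, .ax => by simp only [tensLinv]; exact .symm .axTens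
  | _, _, _, _, .tl f => by simp only [tensLinv]; exact .refl
  | _, _, _, _, .tr f g => by
      simp only [tensLinv]; exact .trans (.symm .trTl) (.trCong (tlTensLinv f) .refl)

/-- Invertibility of `IL` and `⊗L`: the rules `IL⁻¹` and `⊗L⁻¹` are admissible
(witnessed by `ILinv` and `tensLinv`), compatible with `◦≐`, and inverse to `IL`
and `⊗L` respectively. -/
theorem statement10 (V : Type) :
    (∀ (Γ : List (Fma V)) (C : Fma V) (f g : CF (some Fma.unit) Γ C),
      CFEq f g → CFEq (ILinv f) (ILinv g)) ∧
    (∀ (Γ : List (Fma V)) (A B C : Fma V) (f g : CF (some (Fma.tens A B)) Γ C),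
      CFEq f g → CFEq (tensLinv f) (tensLinv g)) ∧
    (∀ (Γ : List (Fma V)) (C : Fma V) (f : CF none Γ C), ILinv (CF.Il f) = f) ∧
    (∀ (Γ : List (Fma V)) (C : Fma V) (f : CF (some Fma.unit) Γ C),
      CFEq (CF.Il (ILinv f)) f) ∧
    (∀ (Γ : List (Fma V)) (A B C : Fma V) (f : CF (some A) (B :: Γ) C),
      tensLinv (CF.tl f) = f) ∧
    (∀ (Γ : List (Fma V)) (A B C : Fma V) (f : CF (some (Fma.tens A B)) Γ C),
      CFEq (CF.tl (tensLinv f)) f) :=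
  ⟨fun _ _ f g e => ILinvCong' e rfl,
   fun _ _ _ _ f g e => tensLinvCong' e rfl,
   fun _ _ f => by simp [ILinv],
   fun _ _ f => IlILinv f,
   fun _ _ _ _ f => by simp [tensLinv],
   fun _ _ _ _ f => tlTensLinv f⟩
end

section
/- For all stoups S and contexts Γ, the rule ⊗L*⁻¹, which from a cut-free derivation of ⟦S ∣ Γ⟧ ∣ Δ ⟶ C produces a cut-free derivation of S ∣ Γ, Δ ⟶ C, is admissible; moreover ⊗L*⁻¹ is compatible with ◦≐ and inverse to the rule ⊗L* (obtained by iterated application of IL and ⊗L, turning a derivation of S ∣ Γ, Δ ⟶ C into one of ⟦S ∣ Γ⟧ ∣ Δ ⟶ C), in the sense that ⊗L*⁻¹(⊗L* f) = f and ⊗L*(⊗L*⁻¹ f) ◦≐ f. -/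
set_option linter.unusedVariables false
def otLstarF {V : Type} {A : Fma V} {Δ : List (Fma V)} {C : Fma V} :
    (Γ : List (Fma V)) → CF (some A) (Γ ++ Δ) C → CF (some (semF A Γ)) Δ C
  | [], f => f
  | B :: Γ', f => otLstarF Γ' (.tl f)

def otLinvF {V : Type} {A : Fma V} {Δ : List (Fma V)} {C : Fma V} :
    (Γ : List (Fma V)) → CF (some (semF A Γ)) Δ C → CF (some A) (Γ ++ Δ) C
  | [], f => f
  | B :: Γ', f => tensLinv (otLinvF Γ' f)

def otLstar {V : Type} (S : Stp V) (Γ : List (Fma V)) {Δ : List (Fma V)} {C : Fma V}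
    (f : CF S (Γ ++ Δ) C) : CF (some (sem S Γ)) Δ C :=
  match S, f with
  | some _, f => otLstarF Γ f
  | none, f => otLstarF Γ (.Il f)

def otLinvstar {V : Type} (S : Stp V) (Γ : List (Fma V)) {Δ : List (Fma V)} {C : Fma V}
    (f : CF (some (sem S Γ)) Δ C) : CF S (Γ ++ Δ) C :=
  match S, f with
  | some _, f => otLinvF Γ f
  | none, f => ILinv (otLinvF Γ f)

section Aux
variable {V : Type}

@[simp] theorem ILinv_ax : ILinv (V := V) .ax = .Ir := by simp [ILinv]

@[simp] theorem ILinv_Il {Γ : List (Fma V)} {C : Fma V} (f : CF none Γ C) :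
    ILinv (.Il f) = f := by simp [ILinv]

@[simp] theorem ILinv_tr {Γ Δ : List (Fma V)} {A B : Fma V}
    (f : CF (some Fma.unit) Γ A) (g : CF none Δ B) :
    ILinv (.tr f g) = .tr (ILinv f) g := by simp [ILinv]

@[simp] theorem tensLinv_ax {A B : Fma V} :
    tensLinv (.ax (A := Fma.tens A B)) = .tr .ax (.uf .ax) := by simp [tensLinv]

@[simp] theorem tensLinv_tl {Γ : List (Fma V)} {A B C : Fma V}
    (f : CF (some A) (B :: Γ) C) : tensLinv (.tl f) = f := by simp [tensLinv]

@[simp] theorem tensLinv_tr {Γ Δ : List (Fma V)} {A B A' B' : Fma V}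
    (f : CF (some (Fma.tens A B)) Γ A') (g : CF none Δ B') :
    tensLinv (.tr f g) = .tr (tensLinv f) g := by simp [tensLinv]

theorem ILinv_cong_aux {S : Stp V} {Γ : List (Fma V)} {C : Fma V} {f g : CF S Γ C}
    (h : CFEq f g) :
    ∀ (e : S = some Fma.unit) {f' g' : CF (some Fma.unit) Γ C},
      HEq f f' → HEq g g' → CFEq (ILinv f') (ILinv g') := by
  induction h with
  | refl =>
    intro e f' g' hf hg
    subst e
    cases eq_of_heq hf; cases eq_of_heq hg
    exact .refl
  | symm h ih =>
    intro e f' g' hf hg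
    exact .symm (ih e hg hf)
  | trans h1 h2 ih1 ih2 =>
    intro e f' g' hf hg
    subst e
    exact .trans (ih1 rfl hf HEq.rfl) (ih2 rfl HEq.rfl hg)
  | ufCong h ih => intro e; simp at e
  | IlCong h ih =>
    intro e f' g' hf hg
    cases eq_of_heq hf; cases eq_of_heq hg
    simp only [ILinv_Il]
    exact h
  | tlCong h ih => intro e; simp at e
  | trCong h1 h2 ih1 ih2 =>
    intro e f' g' hf hg
    subst e
    cases eq_of_heq hf; cases eq_of_heq hg
    simp only [ILinv_tr]
    exact .trCong (ih1 rfl HEq.rfl HEq.rfl) h2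
  | axI =>
    intro e f' g' hf hg
    cases eq_of_heq hf; cases eq_of_heq hg
    simp only [ILinv_ax, ILinv_Il]
    exact .refl
  | axTens => intro e; simp at e
  | trUf => intro e; simp at e
  | trIl =>
    intro e f' g' hf hg
    cases eq_of_heq hf; cases eq_of_heq hg
    simp only [ILinv_tr, ILinv_Il]
    exact .refl
  | trTl => intro e; simp at e

theorem ILinv_cong {Γ : List (Fma V)} {C : Fma V} {f g : CF (some Fma.unit) Γ C}
    (h : CFEq f g) : CFEq (ILinv f) (ILinv g) :=
  ILinv_cong_aux h rfl HEq.rfl HEq.rfl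

theorem tensLinv_cong_aux {S : Stp V} {Γ : List (Fma V)} {C : Fma V} {f g : CF S Γ C}
    (h : CFEq f g) :
    ∀ {A B : Fma V} (e : S = some (Fma.tens A B)) {f' g' : CF (some (Fma.tens A B)) Γ C},
      HEq f f' → HEq g g' → CFEq (tensLinv f') (tensLinv g') := by
  induction h with
  | refl =>
    intro A B e f' g' hf hg
    subst e
    cases eq_of_heq hf; cases eq_of_heq hg
    exact .refl
  | symm h ih =>
    intro A B e f' g' hf hg
    exact .symm (ih e hg hf)
  | trans h1 h2 ih1 ih2 =>
    intro A B e f' g' hf hg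
    subst e
    exact .trans (ih1 rfl hf HEq.rfl) (ih2 rfl HEq.rfl hg)
  | ufCong h ih => intro A B e; simp at e
  | IlCong h ih => intro A B e; simp at e
  | tlCong h ih =>
    intro A B e f' g' hf hg
    injection e with e
    injection e with e1 e2
    subst e1; subst e2
    cases eq_of_heq hf; cases eq_of_heq hg
    simp only [tensLinv_tl]
    exact h
  | trCong h1 h2 ih1 ih2 =>
    intro A B e f' g' hf hg
    subst e
    cases eq_of_heq hf; cases eq_of_heq hg
    simp only [tensLinv_tr]
    exact .trCong (ih1 rfl HEq.rfl HEq.rfl) h2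
  | axI => intro A B e; simp at e
  | axTens =>
    intro A B e f' g' hf hg
    injection e with e
    injection e with e1 e2
    subst e1; subst e2
    cases eq_of_heq hf; cases eq_of_heq hg
    simp only [tensLinv_ax, tensLinv_tl]
    exact .refl
  | trUf => intro A B e; simp at e
  | trIl => intro A B e; simp at e
  | trTl =>
    intro A B e f' g' hf hg
    injection e with e
    injection e with e1 e2
    subst e1; subst e2
    cases eq_of_heq hf; cases eq_of_heq hg
    simp only [tensLinv_tr, tensLinv_tl]
    exact .refl

theorem tensLinv_cong {Γ : List (Fma V)} {A B C : Fma V}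
    {f g : CF (some (Fma.tens A B)) Γ C} (h : CFEq f g) :
    CFEq (tensLinv f) (tensLinv g) :=
  tensLinv_cong_aux h rfl HEq.rfl HEq.rfl

theorem otLinvF_cong {A : Fma V} {Δ : List (Fma V)} {C : Fma V} :
    ∀ (Γ : List (Fma V)) {f g : CF (some (semF A Γ)) Δ C}, CFEq f g →
      CFEq (otLinvF Γ f) (otLinvF Γ g)
  | [], _, _, h => h
  | B :: Γ', _, _, h => tensLinv_cong (otLinvF_cong Γ' h)

theorem otLstarF_cong {A : Fma V} {Δ : List (Fma V)} {C : Fma V} :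
    ∀ (Γ : List (Fma V)) {f g : CF (some A) (Γ ++ Δ) C}, CFEq f g →
      CFEq (otLstarF Γ f) (otLstarF Γ g)
  | [], _, _, h => h
  | B :: Γ', _, _, h => otLstarF_cong Γ' (.tlCong h)

theorem Il_ILinv {Γ : List (Fma V)} {C : Fma V} :
    ∀ (f : CF (some Fma.unit) Γ C), CFEq (CF.Il (ILinv f)) f
  | .ax => by
      simp only [ILinv_ax]
      exact .symm .axI
  | .Il f => by
      simp only [ILinv_Il]
      exact .refl
  | .tr f g => by
      simp only [ILinv_tr]
      exact .trans (.symm .trIl) (.trCong (Il_ILinv f) .refl)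

theorem tl_tensLinv {Γ : List (Fma V)} {A B C : Fma V} :
    ∀ (f : CF (some (Fma.tens A B)) Γ C), CFEq (CF.tl (tensLinv f)) f
  | .ax => by
      simp only [tensLinv_ax]
      exact .symm .axTens
  | .tl f => by
      simp only [tensLinv_tl]
      exact .refl
  | .tr f g => by
      simp only [tensLinv_tr]
      exact .trans (.symm .trTl) (.trCong (tl_tensLinv f) .refl)

theorem otLinvF_otLstarF {Δ : List (Fma V)} {C : Fma V} :
    ∀ (Γ : List (Fma V)) {A : Fma V} (f : CF (some A) (Γ ++ Δ) C),
      otLinvF Γ (otLstarF Γ f) = f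
  | [], _, f => rfl
  | B :: Γ', _, f => by
      show tensLinv (otLinvF Γ' (otLstarF Γ' (.tl f))) = f
      rw [otLinvF_otLstarF Γ' (.tl f), tensLinv_tl]

theorem otLstarF_otLinvF {Δ : List (Fma V)} {C : Fma V} :
    ∀ (Γ : List (Fma V)) {A : Fma V} (f : CF (some (semF A Γ)) Δ C),
      CFEq (otLstarF Γ (otLinvF Γ f)) f
  | [], _, f => .refl
  | B :: Γ', _, f => by
      show CFEq (otLstarF Γ' (.tl (tensLinv (otLinvF Γ' f)))) f
      exact .trans (otLstarF_cong Γ' (tl_tensLinv _)) (otLstarF_otLinvF Γ' f)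

end Aux

/-- The rule `⊗L*⁻¹` (witnessed by `otLinvstar`) is admissible, compatible with `◦≐`,
and inverse to the rule `⊗L*` (iterated `IL`/`⊗L`, witnessed by `otLstar`). -/
theorem statement11 (V : Type) :
    (∀ (S : Stp V) (Γ Δ : List (Fma V)) (C : Fma V) (f g : CF (some (sem S Γ)) Δ C),
      CFEq f g → CFEq (otLinvstar S Γ f) (otLinvstar S Γ g)) ∧
    (∀ (S : Stp V) (Γ Δ : List (Fma V)) (C : Fma V) (f : CF S (Γ ++ Δ) C),
      otLinvstar S Γ (otLstar S Γ f) = f) ∧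
    (∀ (S : Stp V) (Γ Δ : List (Fma V)) (C : Fma V) (f : CF (some (sem S Γ)) Δ C),
      CFEq (otLstar S Γ (otLinvstar S Γ f)) f) := by
  refine ⟨?_, ?_, ?_⟩
  · intro S Γ Δ C f g h
    match S with
    | some A => exact otLinvF_cong Γ h
    | none => exact ILinv_cong (otLinvF_cong Γ h)
  · intro S Γ Δ C f
    match S with
    | some A => exact otLinvF_otLstarF Γ f
    | none =>
      show ILinv (otLinvF Γ (otLstarF Γ (.Il f))) = f
      rw [otLinvF_otLstarF Γ (.Il f), ILinv_Il]
  · intro S Γ Δ C f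
    match S with
    | some A => exact otLstarF_otLinvF Γ f
    | none =>
      show CFEq (otLstarF Γ (.Il (ILinv (otLinvF Γ f)))) f
      exact .trans (otLstarF_cong Γ (Il_ILinv _)) (otLstarF_otLinvF Γ f)
end
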